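/- Let a_L be the Liouville 1-form on ℝ², a_L(x,y)(v) = x·v₂. There do not exist a local diffeomorphism φ of ℝ² at the origin with φ(0) = 0 and smooth nonvanishing functions κ, λ near 0 such that a_L = κ·φ*(a_L) and x − y² = λ·((y − x²) ∘ φ) on a neighborhood of the origin. In other words, the germs x − y² and y − x² are not K_{a_L}-equivalent, and hence the vector fields (x − y²)·X_L and (y − x²)·X_L, where X_L(x,y) = (−x, 0), are not orbitally a_L-conjugate, even though both have codimension 2. -/

import Mathlib

noncomputable section

/-- The Liouville 1-form `a_L(x,y)(v) = x·v₂`. -/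
def aL : ℝ × ℝ → ((ℝ × ℝ) →L[ℝ] ℝ) :=
  fun p => p.1 • ContinuousLinearMap.snd ℝ ℝ ℝ

/-- The vector field `X_L(x,y) = (−x, 0)`. -/
def XL : ℝ × ℝ → ℝ × ℝ := fun p => (-p.1, 0)

lemma exists_clequiv {f : (ℝ×ℝ) →L[ℝ] (ℝ×ℝ)} (hf : f.det ≠ 0) :
    ∃ e : (ℝ×ℝ) ≃L[ℝ] (ℝ×ℝ), (e : (ℝ×ℝ) →L[ℝ] (ℝ×ℝ)) = f := by
  have h : LinearMap.det (f : (ℝ×ℝ) →ₗ[ℝ] (ℝ×ℝ)) ≠ 0 := hf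
  refine ⟨(LinearMap.equivOfDetNeZero _ h).toContinuousLinearEquiv,
    ContinuousLinearMap.ext fun x => ?_⟩
  show (LinearMap.equivOfDetNeZero _ h).toContinuousLinearEquiv x = f x
  simp [LinearEquiv.coe_toContinuousLinearEquiv']

lemma form_key {φ : ℝ×ℝ → ℝ×ℝ} {W : Set (ℝ×ℝ)} {κ : ℝ×ℝ → ℝ}
    (hdet : ∀ p ∈ W, (fderiv ℝ φ p).det ≠ 0)
    (hκ : ∀ p ∈ W, κ p ≠ 0)
    (hform : ∀ p ∈ W, aL p = κ p • ((aL (φ p)).comp (fderiv ℝ φ p)))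
    {p : ℝ×ℝ} (hp : p ∈ W) : (p.1 = 0 ↔ (φ p).1 = 0) := by
  obtain ⟨e, he⟩ := exists_clequiv (hdet p hp)
  have hv : ∀ v : ℝ×ℝ, p.1 * v.2 = κ p * ((φ p).1 * ((fderiv ℝ φ p) v).2) := by
    intro v
    have h := ContinuousLinearMap.ext_iff.mp (hform p hp) v
    simpa [aL, mul_comm] using h
  constructor
  · intro h0
    have h1 := hv (e.symm (0,1))
    rw [h0, ← he] at h1
    simp at h1
    rcases h1 with h1 | h1
    · exact absurd h1 (hκ p hp)
    · exact h1
  · intro h0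
    have h1 := hv (0,1)
    rw [h0] at h1
    simpa using h1

lemma deriv_along {φ : ℝ×ℝ → ℝ×ℝ} {W : Set (ℝ×ℝ)} (hW : IsOpen W) (h0 : (0:ℝ×ℝ) ∈ W)
    (hφ : ContDiffOn ℝ (⊤:ℕ∞) φ W) {c : ℝ → ℝ×ℝ} {c' : ℝ×ℝ} (hc : HasDerivAt c c' 0)
    (hc0 : c 0 = 0) : HasDerivAt (fun t => φ (c t)) (fderiv ℝ φ 0 c') 0 := by
  have hdiff : DifferentiableAt ℝ φ 0 :=
    (hφ.contDiffAt (hW.mem_nhds h0)).differentiableAt (by simp)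
  have hF : HasFDerivAt φ (fderiv ℝ φ 0) (c 0) := by rw [hc0]; exact hdiff.hasFDerivAt
  exact hF.comp_hasDerivAt 0 hc

lemma comp_fst {v : ℝ → ℝ×ℝ} {v' : ℝ×ℝ} (h : HasDerivAt v v' 0) :
    HasDerivAt (fun t => (v t).1) v'.1 0 :=
  (ContinuousLinearMap.fst ℝ ℝ ℝ).hasFDerivAt.comp_hasDerivAt 0 h

lemma comp_snd {v : ℝ → ℝ×ℝ} {v' : ℝ×ℝ} (h : HasDerivAt v v' 0) :
    HasDerivAt (fun t => (v t).2) v'.2 0 :=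
  (ContinuousLinearMap.snd ℝ ℝ ℝ).hasFDerivAt.comp_hasDerivAt 0 h

lemma line_deriv : HasDerivAt (fun t : ℝ => ((0:ℝ), t)) ((0:ℝ),(1:ℝ)) 0 :=
  (hasDerivAt_const (0:ℝ) (0:ℝ)).prodMk (hasDerivAt_id 0)

lemma parab_deriv : HasDerivAt (fun t : ℝ => (t^2, t)) ((0:ℝ),(1:ℝ)) 0 := by
  have h1 : HasDerivAt (fun t : ℝ => t^2) 0 0 := by
    simpa using (hasDerivAt_pow 2 (0:ℝ))
  exact h1.prodMk (hasDerivAt_id 0)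

/-- The first component of `fderiv φ 0 (0,1)` vanishes, from the form equation. -/
lemma fderiv_fst_zero {φ : ℝ×ℝ → ℝ×ℝ} {W : Set (ℝ×ℝ)} {κ : ℝ×ℝ → ℝ}
    (hW : IsOpen W) (h0W : (0:ℝ×ℝ) ∈ W)
    (hφ : ContDiffOn ℝ (⊤:ℕ∞) φ W)
    (hdet : ∀ p ∈ W, (fderiv ℝ φ p).det ≠ 0)
    (hκ : ∀ p ∈ W, κ p ≠ 0)
    (hform : ∀ p ∈ W, aL p = κ p • ((aL (φ p)).comp (fderiv ℝ φ p))) :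
    (fderiv ℝ φ 0 ((0:ℝ),(1:ℝ))).1 = 0 := by
  have hlineW : ∀ᶠ t : ℝ in nhds 0, ((0:ℝ), t) ∈ W := by
    have hc : ContinuousAt (fun t : ℝ => ((0:ℝ), t)) 0 :=
      (continuous_const.prodMk continuous_id).continuousAt
    exact hc.preimage_mem_nhds (hW.mem_nhds (by exact h0W))
  have hφ1 : ∀ᶠ t : ℝ in nhds 0, (φ ((0:ℝ), t)).1 = 0 := by
    filter_upwards [hlineW] with t ht
    exact (form_key hdet hκ hform ht).mp rfl
  have hd := deriv_along hW h0W hφ line_deriv rfl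
  have h1 : HasDerivAt (fun t => (φ ((0:ℝ),t)).1) (fderiv ℝ φ 0 ((0:ℝ),(1:ℝ))).1 0 := comp_fst hd
  have h2 : HasDerivAt (fun t => (φ ((0:ℝ),t)).1) 0 0 :=
    (hasDerivAt_const (0:ℝ) (0:ℝ)).congr_of_eventuallyEq hφ1
  exact h1.unique h2

/-- Final contradiction from `fderiv φ 0 (0,1) = 0`. -/
lemma det_contra {φ : ℝ×ℝ → ℝ×ℝ}
    (hdet0 : (fderiv ℝ φ 0).det ≠ 0)
    (h1 : (fderiv ℝ φ 0 ((0:ℝ),(1:ℝ))).1 = 0)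
    (h2 : (fderiv ℝ φ 0 ((0:ℝ),(1:ℝ))).2 = 0) : False := by
  obtain ⟨e, he⟩ := exists_clequiv hdet0
  have hz : fderiv ℝ φ 0 ((0:ℝ),(1:ℝ)) = 0 := Prod.ext h1 h2
  have he1 : e ((0:ℝ),(1:ℝ)) = 0 := by
    have h := ContinuousLinearMap.ext_iff.mp he ((0:ℝ),(1:ℝ))
    exact h.trans hz
  have : ((0:ℝ),(1:ℝ)) = (0 : ℝ×ℝ) := e.injective (by simpa using he1)
  simpa using congrArg Prod.snd this

/-- The germs `x − y²` and `y − x²` are not `K_{a_L}`-equivalent: no local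
diffeomorphism `φ` fixing the origin with `a_L = κ·φ*(a_L)` and smooth
nonvanishing `κ, λ` satisfies `x − y² = λ·((y − x²) ∘ φ)` near the origin.
Hence the vector fields `(x − y²)·X_L` and `(y − x²)·X_L` are not orbitally
`a_L`-conjugate. -/
theorem stmt_18 :
    (¬ ∃ (φ : ℝ × ℝ → ℝ × ℝ) (W : Set (ℝ × ℝ)) (κ lam : ℝ × ℝ → ℝ),
        IsOpen W ∧ (0 : ℝ × ℝ) ∈ W ∧ φ 0 = 0 ∧
        ContDiffOn ℝ (⊤ : ℕ∞) φ W ∧ (∀ p ∈ W, (fderiv ℝ φ p).det ≠ 0) ∧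
        ContDiffOn ℝ (⊤ : ℕ∞) κ W ∧ (∀ p ∈ W, κ p ≠ 0) ∧
        ContDiffOn ℝ (⊤ : ℕ∞) lam W ∧ (∀ p ∈ W, lam p ≠ 0) ∧
        (∀ p ∈ W, aL p = κ p • ((aL (φ p)).comp (fderiv ℝ φ p))) ∧
        (∀ p ∈ W, p.1 - p.2 ^ 2 = lam p * ((φ p).2 - (φ p).1 ^ 2))) ∧
    (¬ ∃ (φ : ℝ × ℝ → ℝ × ℝ) (W : Set (ℝ × ℝ)) (κ μ : ℝ × ℝ → ℝ),
        IsOpen W ∧ (0 : ℝ × ℝ) ∈ W ∧ φ 0 = 0 ∧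
        ContDiffOn ℝ (⊤ : ℕ∞) φ W ∧ (∀ p ∈ W, (fderiv ℝ φ p).det ≠ 0) ∧
        ContDiffOn ℝ (⊤ : ℕ∞) κ W ∧ (∀ p ∈ W, κ p ≠ 0) ∧
        ContDiffOn ℝ (⊤ : ℕ∞) μ W ∧ (∀ p ∈ W, μ p ≠ 0) ∧
        (∀ p ∈ W, aL p = κ p • ((aL (φ p)).comp (fderiv ℝ φ p))) ∧
        (∀ p ∈ W, (p.1 - p.2 ^ 2) • XL p =
          μ p • (fderiv ℝ φ p).inverse (((φ p).2 - (φ p).1 ^ 2) • XL (φ p)))) := by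
  constructor
  · rintro ⟨φ, W, κ, lam, hW, h0W, hφ0, hφ, hdet, hκs, hκ, hlams, hlam, hform, heq⟩
    have hD1 := fderiv_fst_zero hW h0W hφ hdet hκ hform
    -- second component via the line
    have hlineW : ∀ᶠ t : ℝ in nhds 0, ((0:ℝ), t) ∈ W := by
      have hc : ContinuousAt (fun t : ℝ => ((0:ℝ), t)) 0 :=
        (continuous_const.prodMk continuous_id).continuousAt
      exact hc.preimage_mem_nhds (hW.mem_nhds (by exact h0W))
    have hφ1 : ∀ᶠ t : ℝ in nhds 0, (φ ((0:ℝ), t)).1 = 0 := by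
      filter_upwards [hlineW] with t ht
      exact (form_key hdet hκ hform ht).mp rfl
    have hlamline : DifferentiableAt ℝ (fun t : ℝ => lam ((0:ℝ),t)) 0 := by
      have h1 : DifferentiableAt ℝ lam 0 :=
        (hlams.contDiffAt (hW.mem_nhds h0W)).differentiableAt (by simp)
      have h2 : DifferentiableAt ℝ (fun t : ℝ => ((0:ℝ), t)) 0 :=
        (differentiableAt_const _).prodMk differentiableAt_id
      exact h1.comp 0 h2
    have hlam0 : lam ((0:ℝ),(0:ℝ)) ≠ 0 := hlam 0 h0W
    have hinv : HasDerivAt (fun t : ℝ => (lam ((0:ℝ),t))⁻¹)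
        (-(deriv (fun t : ℝ => lam ((0:ℝ),t)) 0) / (lam ((0:ℝ),(0:ℝ)))^2) 0 :=
      hlamline.hasDerivAt.inv hlam0
    have hneg : HasDerivAt (fun t : ℝ => -t^2) 0 0 := by
      have h := (hasDerivAt_pow 2 (0:ℝ)).neg
      simp at h
      exact h
    have hmul : HasDerivAt (fun t : ℝ => -t^2 * (lam ((0:ℝ),t))⁻¹) 0 0 := by
      have := hneg.mul hinv
      simp at this
      exact this
    have hev2 : ∀ᶠ t : ℝ in nhds 0, (φ ((0:ℝ),t)).2 = -t^2 * (lam ((0:ℝ),t))⁻¹ := by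
      filter_upwards [hlineW, hφ1] with t ht h1
      have h := heq ((0:ℝ),t) ht
      simp only [h1] at h
      have hl := hlam ((0:ℝ),t) ht
      field_simp at h ⊢
      linarith
    have hd := deriv_along hW h0W hφ line_deriv rfl
    have h2a : HasDerivAt (fun t => (φ ((0:ℝ),t)).2) (fderiv ℝ φ 0 ((0:ℝ),(1:ℝ))).2 0 :=
      comp_snd hd
    have h2b : HasDerivAt (fun t => (φ ((0:ℝ),t)).2) 0 0 :=
      hmul.congr_of_eventuallyEq hev2
    exact det_contra (hdet 0 h0W) hD1 (h2a.unique h2b)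
  · rintro ⟨φ, W, κ, μ, hW, h0W, hφ0, hφ, hdet, hκs, hκ, hμs, hμ, hform, hveq⟩
    have hD1 := fderiv_fst_zero hW h0W hφ hdet hκ hform
    have hparW : ∀ᶠ t : ℝ in nhds 0, ((t^2 : ℝ), t) ∈ W := by
      have hc : ContinuousAt (fun t : ℝ => ((t^2:ℝ), t)) 0 :=
        ((continuous_pow 2).prodMk continuous_id).continuousAt
      have h00 : ((0:ℝ)^2, (0:ℝ)) ∈ W := by rw [zero_pow two_ne_zero]; exact h0W
      exact hc.preimage_mem_nhds (hW.mem_nhds (by simpa using h00))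
    have hev : ∀ᶠ t : ℝ in nhds 0, (φ ((t^2:ℝ),t)).2 = (φ ((t^2:ℝ),t)).1 ^ 2 := by
      filter_upwards [hparW] with t ht
      by_cases h0 : t = 0
      · subst h0
        simp only [show (((0:ℝ)^2 : ℝ), (0:ℝ)) = (0 : ℝ×ℝ) by norm_num, hφ0]
        norm_num
      · set p : ℝ×ℝ := ((t^2:ℝ), t) with hp
        have h := hveq p ht
        have hz : p.1 - p.2 ^ 2 = 0 := by simp [hp]
        rw [hz, zero_smul] at h
        have hinvz : (fderiv ℝ φ p).inverse (((φ p).2 - (φ p).1 ^ 2) • XL (φ p)) = 0 := by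
          rcases smul_eq_zero.mp h.symm with h' | h'
          · exact absurd h' (hμ p ht)
          · exact h'
        obtain ⟨e, he⟩ := exists_clequiv (hdet p ht)
        rw [← he, ContinuousLinearMap.inverse_equiv] at hinvz
        have hw : ((φ p).2 - (φ p).1 ^ 2) • XL (φ p) = 0 := e.symm.injective (by simpa using hinvz)
        have hφ1 : (φ p).1 ≠ 0 := by
          intro hc
          have : p.1 = 0 := (form_key hdet hκ hform ht).mpr hc
          simp [hp] at this
          exact h0 this
        have hw1 := congrArg Prod.fst hw
        simp only [XL, Prod.smul_mk, smul_eq_mul, Prod.fst_zero] at hw1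
        have : (φ p).2 - (φ p).1 ^ 2 = 0 := by
          rcases mul_eq_zero.mp hw1 with h' | h'
          · exact h'
          · exact absurd (neg_eq_zero.mp h') hφ1
        linarith [this]
    have hdpar := deriv_along hW h0W hφ parab_deriv (by norm_num [Prod.ext_iff])
    have h2a : HasDerivAt (fun t => (φ ((t^2:ℝ),t)).2) (fderiv ℝ φ 0 ((0:ℝ),(1:ℝ))).2 0 :=
      comp_snd hdpar
    have h1a : HasDerivAt (fun t => (φ ((t^2:ℝ),t)).1) (fderiv ℝ φ 0 ((0:ℝ),(1:ℝ))).1 0 :=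
      comp_fst hdpar
    have hsq : HasDerivAt (fun t => (φ ((t^2:ℝ),t)).1 ^ 2) 0 0 := by
      have h := h1a.pow 2
      have h00 : (φ (((0:ℝ)^2 : ℝ), (0:ℝ))).1 = 0 := by
        rw [show (((0:ℝ)^2 : ℝ), (0:ℝ)) = (0 : ℝ×ℝ) by norm_num, hφ0]; rfl
      rw [h00] at h
      simp at h
      exact h
    have h2b : HasDerivAt (fun t => (φ ((t^2:ℝ),t)).2) 0 0 :=
      hsq.congr_of_eventuallyEq hev
    exact det_contra (hdet 0 h0W) hD1 (h2a.unique h2b)
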